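/- arXiv:2111.12605 — 2 statements merged into one kernel-verified Lean document; each statement's English description precedes it below -/
import Mathlib

section
/- Let A be a C*-algebra, E a Hilbert A-module, and T : E → E adjointable admitting a modulus R (an adjointable R : E → E with R* = R, ⟨Rx,x⟩ ≥ 0 in A for all x ∈ E, and R∘R = T*∘T). Then ‖T‖ ≤ π̃₁(T), where π̃₁(T) = sup{ ‖Σᵢ₌₁ⁿ ⟨Rxᵢ,xᵢ⟩‖ : n ∈ ℕ, x₁,…,xₙ ∈ E, μₙ(x₁,…,xₙ) ≤ 1 }. -/
open scoped InnerProductSpace RightActions ENNReal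

noncomputable section

/-- The older Mathlib's `CStarModule`: a right Hilbert module (action of `Aᵐᵒᵖ`), with inner
product `A`-linear in the second variable: `⟪x, y <• a⟫ = ⟪x, y⟫ * a`. -/
class RightCStarModule (A : outParam <| Type*) (E : Type*) [NonUnitalSemiring A] [StarRing A] [Module ℂ A]
    [AddCommGroup E] [Module ℂ E] [PartialOrder A] [SMul Aᵐᵒᵖ E] [Norm A] [Norm E]
    extends Inner A E where
  inner_add_right {x} {y} {z} : inner x (y + z) = inner x y + inner x z
  inner_self_nonneg {x} : 0 ≤ inner x x
  inner_self {x} : inner x x = 0 ↔ x = 0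
  inner_op_smul_right {a : A} {x y : E} : inner x (y <• a) = inner x y * a
  inner_smul_right_complex {z : ℂ} {x} {y} : inner x (z • y) = z • inner x y
  star_inner x y : star (inner x y) = inner y x
  norm_eq_sqrt_norm_inner_self x : ‖x‖ = √‖inner x x‖

variable {A : Type*} [NonUnitalCStarAlgebra A] [PartialOrder A] [StarOrderedRing A]
variable {E : Type*} [NormedAddCommGroup E] [NormedSpace ℂ E] [SMul Aᵐᵒᵖ E]
  [RightCStarModule A E] [CompleteSpace E]
variable {F : Type*} [NormedAddCommGroup F] [NormedSpace ℂ F] [SMul Aᵐᵒᵖ F]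
  [RightCStarModule A F] [CompleteSpace F]

/-- `μₙ(x₁,…,xₙ) = sup { ‖Σᵢ ⟪xᵢ, y⟫⟪y, xᵢ⟫‖^(1/2) : y ∈ E, ‖y‖ ≤ 1 }`. -/
def mu {G : Type*} [NormedAddCommGroup G] [NormedSpace ℂ G] [SMul Aᵐᵒᵖ G]
    [RightCStarModule A G] {n : ℕ} (x : Fin n → G) : ℝ :=
  ⨆ y : {y : G // ‖y‖ ≤ 1}, Real.sqrt ‖∑ i, ⟪x i, (y : G)⟫_A * ⟪(y : G), x i⟫_A‖

/-- `π̃₂(T) = sup { ‖Σᵢ ⟪Txᵢ, Txᵢ⟫‖^(1/2) : n ∈ ℕ, μₙ(x₁,…,xₙ) ≤ 1 }` as an element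
of `[0,∞]`. -/
def piTwo {G H : Type*} [NormedAddCommGroup G] [NormedSpace ℂ G] [SMul Aᵐᵒᵖ G]
    [RightCStarModule A G] [NormedAddCommGroup H] [NormedSpace ℂ H] [SMul Aᵐᵒᵖ H]
    [RightCStarModule A H] (T : G → H) : ℝ≥0∞ :=
  ⨆ (n : ℕ) (x : Fin n → G) (_ : mu x ≤ 1),
    ENNReal.ofReal (Real.sqrt ‖∑ i, ⟪T (x i), T (x i)⟫_A‖)

/-- Given (the underlying function of) a modulus `R = |T|` of an operator `T`,
`π̃₁(T) = sup { ‖Σᵢ ⟪Rxᵢ, xᵢ⟫‖ : n ∈ ℕ, μₙ(x₁,…,xₙ) ≤ 1 }` as an element of `[0,∞]`. -/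
def piOne {G : Type*} [NormedAddCommGroup G] [NormedSpace ℂ G] [SMul Aᵐᵒᵖ G]
    [RightCStarModule A G] (R : G → G) : ℝ≥0∞ :=
  ⨆ (n : ℕ) (x : Fin n → G) (_ : mu x ≤ 1),
    ENNReal.ofReal ‖∑ i, ⟪R (x i), x i⟫_A‖

namespace RightCStarModule

lemma inner_op_smul_left {a : A} {x y : E} : ⟪x <• a, y⟫_A = star a * ⟪x, y⟫_A := by
  rw [← RightCStarModule.star_inner, RightCStarModule.inner_op_smul_right, star_mul,
    RightCStarModule.star_inner]

lemma inner_add_left {x y z : E} : ⟪x + y, z⟫_A = ⟪x, z⟫_A + ⟪y, z⟫_A := by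
  rw [← RightCStarModule.star_inner, RightCStarModule.inner_add_right, star_add,
    RightCStarModule.star_inner, RightCStarModule.star_inner]

lemma inner_smul_left_complex {z : ℂ} {x y : E} : ⟪z • x, y⟫_A = star z • ⟪x, y⟫_A := by
  rw [← RightCStarModule.star_inner, RightCStarModule.inner_smul_right_complex, star_smul,
    RightCStarModule.star_inner]

lemma inner_sub_right {x y z : E} : ⟪x, y - z⟫_A = ⟪x, y⟫_A - ⟪x, z⟫_A := by
  have h := RightCStarModule.inner_add_right (A := A) (x := x) (y := y - z) (z := z)
  rw [sub_add_cancel] at h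
  rw [h]; abel

lemma inner_sub_left {x y z : E} : ⟪x - y, z⟫_A = ⟪x, z⟫_A - ⟪y, z⟫_A := by
  rw [← RightCStarModule.star_inner, inner_sub_right, star_sub,
    RightCStarModule.star_inner, RightCStarModule.star_inner]

@[simp]
lemma inner_zero_left {y : E} : ⟪(0 : E), y⟫_A = 0 := by
  have := inner_sub_left (A := A) (x := (0 : E)) (y := (0 : E)) (z := y)
  rwa [sub_self, sub_self] at this

lemma norm_sq_eq {x : E} : ‖x‖ ^ 2 = ‖⟪x, x⟫_A‖ := by
  rw [RightCStarModule.norm_eq_sqrt_norm_inner_self (A := A) x, Real.sq_sqrt (norm_nonneg _)]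

lemma inner_mul_inner_swap_le {x y : E} :
    ⟪y, x⟫_A * ⟪x, y⟫_A ≤ (‖x‖ ^ 2 : ℝ) • ⟪y, y⟫_A := by
  rcases eq_or_ne x 0 with h | h
  · subst h
    have h0 : ⟪(0 : E), y⟫_A = 0 := by
      have := inner_sub_left (A := A) (x := (0 : E)) (y := (0 : E)) (z := y)
      rwa [sub_self, sub_self] at this
    simp [h0]
  set r : ℝ := ‖x‖ ^ 2 with hr
  have hrpos : 0 < r := by have := norm_pos_iff.mpr h; positivity
  have key : ∀ a : A, (0 : A) ≤ r • (star a * a) - r • (star a * ⟪x, y⟫_A)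
      - r • (⟪y, x⟫_A * a) + r • (r • ⟪y, y⟫_A) := fun a => by
    calc (0 : A) ≤ ⟪x <• a - (r : ℂ) • y, x <• a - (r : ℂ) • y⟫_A :=
          RightCStarModule.inner_self_nonneg
      _ = star a * ⟪x, x⟫_A * a - r • (star a * ⟪x, y⟫_A)
          - r • (⟪y, x⟫_A * a) + r • (r • ⟪y, y⟫_A) := by
          simp only [inner_sub_left, inner_sub_right, RightCStarModule.inner_op_smul_right,
            inner_op_smul_left, inner_smul_left_complex,
            RightCStarModule.inner_smul_right_complex, Complex.star_def, Complex.conj_ofReal]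
          simp only [Complex.coe_smul, mul_sub, sub_mul, smul_sub, smul_mul_assoc]
          abel
      _ ≤ r • (star a * a) - r • (star a * ⟪x, y⟫_A)
          - r • (⟪y, x⟫_A * a) + r • (r • ⟪y, y⟫_A) := by
          gcongr
          calc _ ≤ ‖⟪x, x⟫_A‖ • (star a * a) := 
              CStarAlgebra.star_left_conjugate_le_norm_smul (RightCStarModule.star_inner x x)
            _ = r • (star a * a) := by rw [hr, norm_sq_eq (A := A)]
  specialize key ⟪x, y⟫_A
  rw [RightCStarModule.star_inner] at key
  have key' : r • (⟪y, x⟫_A * ⟪x, y⟫_A) ≤ r • (r • ⟪y, y⟫_A) := by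
    have := sub_nonneg.mp (show (0:A) ≤ r • (r • ⟪y, y⟫_A) - r • (⟪y, x⟫_A * ⟪x, y⟫_A) by
      convert key using 1; abel)
    exact this
  exact (smul_le_smul_iff_of_pos_left hrpos).mp key'

variable (E) in
lemma norm_inner_le {x y : E} : ‖⟪x, y⟫_A‖ ≤ ‖x‖ * ‖y‖ := by
  have := calc ‖⟪x, y⟫_A‖ ^ 2 = ‖⟪y, x⟫_A * ⟪x, y⟫_A‖ := by
                rw [← RightCStarModule.star_inner x, CStarRing.norm_star_mul_self, pow_two]
    _ ≤ ‖(‖x‖ ^ 2 : ℝ) • ⟪y, y⟫_A‖ := by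
                refine CStarAlgebra.norm_le_norm_of_nonneg_of_le ?_ inner_mul_inner_swap_le
                rw [← RightCStarModule.star_inner x]
                exact star_mul_self_nonneg ⟪x, y⟫_A
    _ = ‖x‖ ^ 2 * ‖⟪y, y⟫_A‖ := by simp [norm_smul]
    _ = (‖x‖ * ‖y‖) ^ 2 := by rw [← norm_sq_eq (A := A)]; ring
  exact (pow_le_pow_iff_left₀ (norm_nonneg _) (by positivity) (by simp)).mp this

end RightCStarModule

lemma key_bound (R : E →L[ℂ] E)
    (hRsa : ∀ (x y : E), ⟪R x, y⟫_A = ⟪x, R y⟫_A)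
    (hRpos : ∀ x : E, 0 ≤ ⟪R x, x⟫_A)
    (c : ℝ) (hc0 : 0 ≤ c)
    (hc : ∀ z : E, ‖⟪R z, z⟫_A‖ ≤ c * ‖z‖ ^ 2) (x : E) :
    ‖R x‖ ≤ c * ‖x‖ := by
  rcases eq_or_ne (R x) 0 with h | h
  · rw [h, norm_zero]; positivity
  have hx : x ≠ 0 := by rintro rfl; simp at h
  have hRx : (0:ℝ) < ‖R x‖ := norm_pos_iff.mpr h
  have hxn : (0:ℝ) < ‖x‖ := norm_pos_iff.mpr hx
  set t : ℝ := ‖x‖ * ‖R x‖⁻¹ with ht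
  have htpos : 0 < t := by positivity
  set y : E := (t : ℂ) • R x with hy
  have hny : ‖y‖ = ‖x‖ := by
    rw [hy, norm_smul, Complex.norm_real, Real.norm_eq_abs, abs_of_pos htpos, ht]
    field_simp
  set a : A := ⟪R x, x⟫_A with ha
  set b : A := ⟪R y, y⟫_A with hb
  set s : A := ((2 * t : ℝ) : ℂ) • ⟪R x, R x⟫_A with hs
  have hs1 : ⟪R x, y⟫_A = ((t:ℝ):ℂ) • ⟪R x, R x⟫_A := by
    rw [hy, RightCStarModule.inner_smul_right_complex]
  have hs2 : ⟪R y, x⟫_A = ((t:ℝ):ℂ) • ⟪R x, R x⟫_A := by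
    rw [hRsa, hy, RightCStarModule.inner_smul_left_complex]
    simp
  have hcross : ⟪R x, y⟫_A + ⟪R y, x⟫_A = s := by
    rw [hs1, hs2, hs, ← add_smul]
    push_cast
    ring_nf
  have hspos : 0 ≤ s := by
    rw [hs, Complex.coe_smul]
    exact smul_nonneg (by positivity) RightCStarModule.inner_self_nonneg
  have hp : ⟪R (x + y), x + y⟫_A = a + b + s := by
    rw [map_add, RightCStarModule.inner_add_left, RightCStarModule.inner_add_right,
      RightCStarModule.inner_add_right, ← hcross, ha, hb]
    abel
  have hq : ⟪R (x - y), x - y⟫_A = a + b - s := by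
    rw [map_sub, RightCStarModule.inner_sub_left, RightCStarModule.inner_sub_right,
      RightCStarModule.inner_sub_right, ← hcross, ha, hb]
    abel
  have hsle : s + s ≤ a + b + s := by
    have h0 : 0 ≤ a + b - s := hq ▸ hRpos (x - y)
    have hsab : s ≤ a + b := sub_nonneg.mp h0
    calc s + s ≤ (a + b) + s := add_le_add_left hsab s
      _ = a + b + s := rfl
  have hnorm : ‖s + s‖ ≤ ‖a + b + s‖ :=
    CStarAlgebra.norm_le_norm_of_nonneg_of_le (add_nonneg hspos hspos) hsle
  have hss : ‖s + s‖ = 4 * (‖x‖ * ‖R x‖) := by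
    have hcomb : s + s = ((4 * t : ℝ) : ℂ) • ⟪R x, R x⟫_A := by
      rw [hs, ← add_smul]
      norm_cast
      ring_nf
    have hnn : ‖⟪R x, R x⟫_A‖ = ‖R x‖ ^ 2 := (RightCStarModule.norm_sq_eq (A := A)).symm
    rw [hcomb, norm_smul, hnn, Complex.norm_real, Real.norm_eq_abs,
      abs_of_pos (by positivity : (0:ℝ) < 4 * t), ht]
    field_simp
  have hpn : ‖a + b + s‖ ≤ 4 * (c * ‖x‖ ^ 2) := by
    rw [← hp]
    calc ‖⟪R (x + y), x + y⟫_A‖ ≤ c * ‖x + y‖ ^ 2 := hc _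
      _ ≤ c * (‖x‖ + ‖y‖) ^ 2 := by
          gcongr
          exact norm_add_le _ _
      _ = 4 * (c * ‖x‖ ^ 2) := by rw [hny]; ring
  have : 4 * (‖x‖ * ‖R x‖) ≤ 4 * (c * ‖x‖ ^ 2) := by
    rw [← hss]; exact hnorm.trans hpn
  have h4 : ‖x‖ * ‖R x‖ ≤ c * ‖x‖ ^ 2 := by linarith
  calc ‖R x‖ = (‖x‖ * ‖R x‖) / ‖x‖ := by field_simp
    _ ≤ (c * ‖x‖ ^ 2) / ‖x‖ := by gcongr
    _ = c * ‖x‖ := by field_simp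

/-- If `T : E → E` is adjointable with modulus `R` (self-adjoint, positive, `R∘R = T*∘T`),
then `‖T‖ ≤ π̃₁(T)`. -/
theorem norm_le_piOne (T : E →L[ℂ] E) (T' : E →L[ℂ] E)
    (hT : ∀ (x y : E), ⟪T x, y⟫_A = ⟪x, T' y⟫_A)
    (R : E →L[ℂ] E)
    (hRsa : ∀ (x y : E), ⟪R x, y⟫_A = ⟪x, R y⟫_A)
    (hRpos : ∀ x : E, 0 ≤ ⟪R x, x⟫_A)
    (hRR : R.comp R = T'.comp T) :
    ENNReal.ofReal ‖T‖ ≤ piOne (⇑R) := by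
  rcases eq_or_ne (piOne (⇑R)) ⊤ with htop | htop
  · rw [htop]; exact le_top
  set c : ℝ := (piOne (⇑R)).toReal with hcdef
  have hc0 : 0 ≤ c := ENNReal.toReal_nonneg
  -- unit ball bound from piOne
  have h1 : ∀ z : E, ‖z‖ ≤ 1 → ‖⟪R z, z⟫_A‖ ≤ c := by
    intro z hz
    have hmu : mu (A := A) (fun _ : Fin 1 => z) ≤ 1 := by
      rw [mu]
      have hne : Nonempty {y : E // ‖y‖ ≤ 1} := ⟨⟨0, by simp⟩⟩
      refine ciSup_le fun y => ?_
      rw [Real.sqrt_le_one]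
      calc ‖∑ _i : Fin 1, ⟪z, (y : E)⟫_A * ⟪(y : E), z⟫_A‖
          = ‖⟪z, (y : E)⟫_A * ⟪(y : E), z⟫_A‖ := by rw [Fin.sum_univ_one]
        _ ≤ ‖⟪z, (y : E)⟫_A‖ * ‖⟪(y : E), z⟫_A‖ := norm_mul_le _ _
        _ ≤ (‖z‖ * ‖(y : E)‖) * (‖(y : E)‖ * ‖z‖) := by
            gcongr <;> exact RightCStarModule.norm_inner_le E
        _ ≤ (1 * 1) * (1 * 1) := by
            have hy1 := y.2
            gcongr
        _ = 1 := by norm_num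
    have hle : ENNReal.ofReal ‖⟪R z, z⟫_A‖ ≤ piOne (⇑R) := by
      rw [piOne]
      refine le_iSup₂_of_le 1 (fun _ : Fin 1 => z) ?_
      refine le_iSup_of_le hmu ?_
      rw [Fin.sum_univ_one]
    exact (ENNReal.ofReal_le_iff_le_toReal htop).mp hle
  -- homogeneous bound
  have hc : ∀ z : E, ‖⟪R z, z⟫_A‖ ≤ c * ‖z‖ ^ 2 := by
    intro z
    rcases eq_or_ne z 0 with rfl | hz
    · simp
    have hzn : (0:ℝ) < ‖z‖ := norm_pos_iff.mpr hz
    set w : E := ((‖z‖⁻¹ : ℝ) : ℂ) • z with hw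
    have hwn : ‖w‖ ≤ 1 := by
      rw [hw, norm_smul, Complex.norm_real, Real.norm_eq_abs,
        abs_of_nonneg (by positivity)]
      rw [inv_mul_cancel₀ hzn.ne']
    have hWI : ⟪R w, w⟫_A = ((‖z‖⁻¹ ^ 2 : ℝ) : ℂ) • ⟪R z, z⟫_A := by
      rw [hw, map_smul, RightCStarModule.inner_smul_left_complex,
        RightCStarModule.inner_smul_right_complex, smul_smul]
      congr 1
      push_cast
      simp [Complex.conj_ofReal]
      ring
    have := h1 w hwn
    rw [hWI, norm_smul, Complex.norm_real, Real.norm_eq_abs,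
      abs_of_nonneg (by positivity)] at this
    have h2 : ‖⟪R z, z⟫_A‖ = ‖z‖ ^ 2 * (‖z‖⁻¹ ^ 2 * ‖⟪R z, z⟫_A‖) := by
      field_simp
    rw [h2]
    calc ‖z‖ ^ 2 * (‖z‖⁻¹ ^ 2 * ‖⟪R z, z⟫_A‖) ≤ ‖z‖ ^ 2 * c := by gcongr
      _ = c * ‖z‖ ^ 2 := by ring
  have hR : ∀ x : E, ‖R x‖ ≤ c * ‖x‖ := key_bound R hRsa hRpos c hc0 hc
  have hTx : ∀ x : E, ‖T x‖ = ‖R x‖ := by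
    intro x
    have hcomp : R (R x) = T' (T x) := by
      have := congrArg (fun f => (f : E →L[ℂ] E) x) hRR
      simpa using this
    have hinner : ⟪T x, T x⟫_A = ⟪R x, R x⟫_A := by
      rw [hT, ← hcomp, ← hRsa]
    rw [RightCStarModule.norm_eq_sqrt_norm_inner_self (A := A) (T x),
      RightCStarModule.norm_eq_sqrt_norm_inner_self (A := A) (R x), hinner]
  have hTnorm : ‖T‖ ≤ c := by
    refine T.opNorm_le_bound hc0 fun x => ?_
    rw [hTx]; exact hR x
  exact ENNReal.ofReal_le_of_le_toReal hTnorm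
end
end

section
/- Let A be a C*-algebra, E a Hilbert A-module, and T : E → E adjointable with a modulus R (adjointable, R* = R, ⟨Rx,x⟩ ≥ 0 for all x, R∘R = T*∘T). Suppose moreover Q : E → E is adjointable with Q* = Q, ⟨Qx,x⟩ ≥ 0 for all x, and Q∘Q = R (so Q = |T|^{1/2}). Then π̃₂(T)² ≤ ‖T‖·π̃₁(T), i.e. ( sup{ ‖Σᵢ₌₁ⁿ ⟨Txᵢ,Txᵢ⟩‖^{1/2} : n ∈ ℕ, μₙ(x₁,…,xₙ) ≤ 1 } )² ≤ ‖T‖ · sup{ ‖Σᵢ₌₁ⁿ ⟨Rxᵢ,xᵢ⟩‖ : n ∈ ℕ, μₙ(x₁,…,xₙ) ≤ 1 }. -/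
open scoped InnerProductSpace RightActions ENNReal

noncomputable section

variable {A : Type*} [NonUnitalCStarAlgebra A] [PartialOrder A] [StarOrderedRing A]
variable {E : Type*} [NormedAddCommGroup E] [NormedSpace ℂ E] [SMul Aᵐᵒᵖ E]
  [RightCStarModule A E] [CompleteSpace E]
variable {F : Type*} [NormedAddCommGroup F] [NormedSpace ℂ F] [SMul Aᵐᵒᵖ F]
  [RightCStarModule A F] [CompleteSpace F]

/-- Auxiliary: a right C⋆-module over `A` is a (left) C⋆-module over `Aᵐᵒᵖ`. -/
def opCStarModule : CStarModule Aᵐᵒᵖ E where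
  inner x y := MulOpposite.op ⟪x, y⟫_A
  inner_add_right := by
    intro x y z
    rw [RightCStarModule.inner_add_right, MulOpposite.op_add]
  inner_self_nonneg := by
    intro x
    exact RightCStarModule.inner_self_nonneg
  inner_self := by
    intro x
    rw [MulOpposite.op_eq_zero_iff]
    exact RightCStarModule.inner_self
  inner_op_smul_right := by
    intro a x y
    change MulOpposite.op ⟪x, y <• a.unop⟫_A = _
    rw [RightCStarModule.inner_op_smul_right, MulOpposite.op_mul, MulOpposite.op_unop]
  inner_smul_right_complex := by
    intro z x y
    rw [RightCStarModule.inner_smul_right_complex, MulOpposite.op_smul]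
  star_inner x y := by
    rw [← MulOpposite.op_star, RightCStarModule.star_inner]
  norm_eq_sqrt_norm_inner_self x := by
    rw [MulOpposite.norm_op]
    exact RightCStarModule.norm_eq_sqrt_norm_inner_self x

private lemma rnorm_sq_eq {x : E} : ‖x‖ ^ 2 = ‖⟪x, x⟫_A‖ := by
  rw [RightCStarModule.norm_eq_sqrt_norm_inner_self (A := A) x, Real.sq_sqrt (norm_nonneg _)]

private lemma rnorm_inner_le (E : Type*) [NormedAddCommGroup E] [NormedSpace ℂ E] [SMul Aᵐᵒᵖ E]
    [RightCStarModule A E] {x y : E} : ‖⟪x, y⟫_A‖ ≤ ‖x‖ * ‖y‖ := by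
  letI := opCStarModule (A := A) (E := E)
  have h := CStarModule.norm_inner_le E (A := Aᵐᵒᵖ) (x := x) (y := y)
  rw [← MulOpposite.norm_op]
  exact h

private lemma real_aux (s : ℕ → ℝ) (C qn : ℝ) (hqn : 0 ≤ qn) (hC : 0 ≤ C)
    (s0 : ∀ k, 0 ≤ s k)
    (srec : ∀ m : ℕ, s (m + 1) ^ 2 ≤ s (2 * m + 1) * s 1)
    (sbound : ∀ m : ℕ, s m ≤ qn ^ m * C) :
    s 2 ≤ qn * s 1 := by
  have ind : ∀ k : ℕ, s 2 ^ (2 ^ k) ≤ s 1 ^ (2 ^ k - 1) * s (2 ^ k + 1) := by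
    intro k
    induction k with
    | zero => norm_num
    | succ k ih =>
      have h1 : (1 : ℕ) ≤ 2 ^ k := Nat.one_le_two_pow
      calc s 2 ^ (2 ^ (k + 1)) = (s 2 ^ (2 ^ k)) ^ 2 := by
            rw [← pow_mul]; congr 1
        _ ≤ (s 1 ^ (2 ^ k - 1) * s (2 ^ k + 1)) ^ 2 :=
            pow_le_pow_left₀ (pow_nonneg (s0 2) _) ih 2
        _ = (s 1 ^ (2 ^ k - 1)) ^ 2 * s (2 ^ k + 1) ^ 2 := mul_pow ..
        _ ≤ (s 1 ^ (2 ^ k - 1)) ^ 2 * (s (2 * 2 ^ k + 1) * s 1) :=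
            mul_le_mul_of_nonneg_left (srec (2 ^ k)) (by positivity)
        _ = s 1 ^ (2 ^ (k + 1) - 1) * s (2 ^ (k + 1) + 1) := by
            have e1 : (2 ^ k - 1) * 2 + 1 = 2 ^ (k + 1) - 1 := by
              have : 2 ^ (k + 1) = 2 * 2 ^ k := by rw [pow_succ]; ring
              omega
            have e2 : 2 * 2 ^ k + 1 = 2 ^ (k + 1) + 1 := by
              have : 2 ^ (k + 1) = 2 * 2 ^ k := by rw [pow_succ]; ring
              omega
            rw [← pow_mul, ← e1, ← e2, pow_succ]
            ring
  rcases hqn.lt_or_eq with hqn' | hqn'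
  swap
  · -- qn = 0 : then s 2 = 0
    have h2 := sbound 2
    rw [← hqn'] at h2
    have : s 2 ≤ 0 := by simpa using h2
    calc s 2 ≤ 0 := this
      _ ≤ qn * s 1 := mul_nonneg hqn (s0 1)
  rcases (s0 1).lt_or_eq with hs1 | hs1
  swap
  · -- s 1 = 0 : then s 2 = 0
    have h2 := srec 1
    rw [← hs1] at h2
    have hz : s 2 = 0 := by nlinarith [s0 2, s0 3]
    rw [hz, ← hs1]
    simp
  by_contra hcon
  push_neg at hcon
  set q : ℝ := qn * s 1 with hq
  have hqpos : 0 < q := mul_pos hqn' hs1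
  set r : ℝ := s 2 / q with hr
  have hr1 : 1 < r := (one_lt_div hqpos).2 hcon
  set B : ℝ := qn * C / s 1 with hB
  have hrB : ∀ k : ℕ, r ^ (2 ^ k) ≤ B := by
    intro k
    set N : ℕ := 2 ^ k with hN
    have hN1 : 1 ≤ N := Nat.one_le_two_pow
    have key : s 2 ^ N * s 1 ≤ (qn * C) * q ^ N := by
      have h1 : s 2 ^ N ≤ s 1 ^ (N - 1) * s (N + 1) := ind k
      have h2 : s (N + 1) ≤ qn ^ (N + 1) * C := sbound (N + 1)
      have e : (qn * C) * q ^ N = s 1 ^ (N - 1) * (qn ^ (N + 1) * C) * s 1 := by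
        rw [hq, mul_pow]
        have e1 : s 1 ^ N = s 1 ^ (N - 1) * s 1 := by
          rw [← pow_succ]; congr 1; omega
        rw [e1, pow_succ]
        ring
      rw [e]
      calc s 2 ^ N * s 1 ≤ (s 1 ^ (N - 1) * s (N + 1)) * s 1 :=
            mul_le_mul_of_nonneg_right h1 (s0 1)
        _ ≤ (s 1 ^ (N - 1) * (qn ^ (N + 1) * C)) * s 1 :=
            mul_le_mul_of_nonneg_right
              (mul_le_mul_of_nonneg_left h2 (by positivity)) (s0 1)
    rw [hr, div_pow, hB, div_le_div_iff₀ (pow_pos hqpos _) hs1]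
    exact key
  obtain ⟨k, hk⟩ := pow_unbounded_of_one_lt B hr1
  have h1 : r ^ k ≤ r ^ (2 ^ k) := pow_le_pow_right₀ hr1.le (Nat.lt_two_pow_self (n := k)).le
  exact absurd ((hk.trans_le h1).trans_le (hrB k)) (lt_irrefl B)

open WithCStarModule in
private lemma sum_inner_cs' {n : ℕ} (u v : Fin n → E) :
    ‖∑ i, ⟪u i, v i⟫_A‖ ^ 2 ≤ ‖∑ i, ⟪u i, u i⟫_A‖ * ‖∑ i, ⟪v i, v i⟫_A‖ := by
  letI := opCStarModule (A := A) (E := E)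
  let U : C⋆ᵐᵒᵈ(Aᵐᵒᵖ, Fin n → E) := (WithCStarModule.equiv _ _).symm u
  let V : C⋆ᵐᵒᵈ(Aᵐᵒᵖ, Fin n → E) := (WithCStarModule.equiv _ _).symm v
  have h : ‖⟪U, V⟫_(Aᵐᵒᵖ)‖ ≤ ‖U‖ * ‖V‖ := CStarModule.norm_inner_le _
  have hUV : ⟪U, V⟫_(Aᵐᵒᵖ) = MulOpposite.op (∑ i, ⟪u i, v i⟫_A) := by
    rw [WithCStarModule.pi_inner, Finset.op_sum]
    rfl
  have hU : ‖U‖ ^ 2 = ‖∑ i, ⟪u i, u i⟫_A‖ := by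
    rw [WithCStarModule.pi_norm_sq, ← MulOpposite.norm_op (∑ i, ⟪u i, u i⟫_A), Finset.op_sum]
    rfl
  have hV : ‖V‖ ^ 2 = ‖∑ i, ⟪v i, v i⟫_A‖ := by
    rw [WithCStarModule.pi_norm_sq, ← MulOpposite.norm_op (∑ i, ⟪v i, v i⟫_A), Finset.op_sum]
    rfl
  calc ‖∑ i, ⟪u i, v i⟫_A‖ ^ 2 = ‖⟪U, V⟫_(Aᵐᵒᵖ)‖ ^ 2 := by rw [hUV, MulOpposite.norm_op]
    _ ≤ (‖U‖ * ‖V‖) ^ 2 := pow_le_pow_left₀ (norm_nonneg _) h 2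
    _ = ‖U‖ ^ 2 * ‖V‖ ^ 2 := mul_pow ..
    _ = _ := by rw [hU, hV]

private lemma core' (Q : E →L[ℂ] E)
    (hQsa : ∀ x y : E, ⟪Q x, y⟫_A = ⟪x, Q y⟫_A) {n : ℕ} (x : Fin n → E) :
    ‖∑ i, ⟪(Q ^ 2) (x i), (Q ^ 2) (x i)⟫_A‖ ≤
      ‖Q‖ ^ 2 * ‖∑ i, ⟪(Q ^ 1) (x i), (Q ^ 1) (x i)⟫_A‖ := by
  have hsa : ∀ (m : ℕ) (u v : E), ⟪(Q ^ m) u, v⟫_A = ⟪u, (Q ^ m) v⟫_A := by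
    intro m
    induction m with
    | zero => intro u v; simp
    | succ m ih =>
      intro u v
      have e1 : (Q ^ (m + 1)) u = (Q ^ m) (Q u) := by
        rw [pow_succ, ContinuousLinearMap.mul_apply]
      have e2 : (Q ^ (m + 1)) v = Q ((Q ^ m) v) := by
        rw [pow_succ', ContinuousLinearMap.mul_apply]
      rw [e1, ih, hQsa, ← e2]
  have hb : ∀ (m : ℕ) (z : E), ‖(Q ^ m) z‖ ≤ ‖Q‖ ^ m * ‖z‖ := by
    intro m
    induction m with
    | zero => intro z; simp
    | succ m ih =>
      intro z
      have e1 : (Q ^ (m + 1)) z = (Q ^ m) (Q z) := by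
        rw [pow_succ, ContinuousLinearMap.mul_apply]
      calc ‖(Q ^ (m + 1)) z‖ = ‖(Q ^ m) (Q z)‖ := by rw [e1]
        _ ≤ ‖Q‖ ^ m * ‖Q z‖ := ih (Q z)
        _ ≤ ‖Q‖ ^ m * (‖Q‖ * ‖z‖) := by gcongr; exact Q.le_opNorm z
        _ = ‖Q‖ ^ (m + 1) * ‖z‖ := by ring
  refine real_aux (fun k => ‖∑ i, ⟪(Q ^ k) (x i), (Q ^ k) (x i)⟫_A‖)
    (∑ i, ‖x i‖ ^ 2) (‖Q‖ ^ 2) (by positivity)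
    (Finset.sum_nonneg fun i _ => sq_nonneg _) (fun k => norm_nonneg _) ?_ ?_
  · -- recursion
    intro m
    have key : ∀ i : Fin n, ⟪(Q ^ (m + 1)) (x i), (Q ^ (m + 1)) (x i)⟫_A
        = ⟪(Q ^ (2 * m + 1)) (x i), (Q ^ 1) (x i)⟫_A := by
      intro i
      have e1 : (Q ^ (m + 1)) (x i) = (Q ^ m) ((Q ^ 1) (x i)) := by
        rw [pow_one, pow_succ, ContinuousLinearMap.mul_apply]
      have e0 : Q ^ m * Q ^ m * Q ^ 1 = Q ^ (2 * m + 1) := by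
        rw [← pow_add, ← pow_add]
        congr 1
        omega
      have e2 : (Q ^ m) ((Q ^ m) ((Q ^ 1) (x i))) = (Q ^ (2 * m + 1)) (x i) := by
        rw [← ContinuousLinearMap.mul_apply, ← ContinuousLinearMap.mul_apply, e0]
      conv_lhs => rw [e1, ← hsa m, e2]
    have e : ‖∑ i, ⟪(Q ^ (m + 1)) (x i), (Q ^ (m + 1)) (x i)⟫_A‖
        = ‖∑ i, ⟪(Q ^ (2 * m + 1)) (x i), (Q ^ 1) (x i)⟫_A‖ :=
      congrArg _ (Finset.sum_congr rfl fun i _ => key i)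
    simp only [e]
    exact sum_inner_cs' _ _
  · -- bound
    intro m
    calc ‖∑ i, ⟪(Q ^ m) (x i), (Q ^ m) (x i)⟫_A‖
        ≤ ∑ i, ‖⟪(Q ^ m) (x i), (Q ^ m) (x i)⟫_A‖ := norm_sum_le _ _
      _ = ∑ i, ‖(Q ^ m) (x i)‖ ^ 2 := by
          refine Finset.sum_congr rfl fun i _ => ?_
          rw [rnorm_sq_eq]
      _ ≤ ∑ i, (‖Q‖ ^ m * ‖x i‖) ^ 2 := by
          refine Finset.sum_le_sum fun i _ => ?_
          exact pow_le_pow_left₀ (norm_nonneg _) (hb m (x i)) 2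
      _ = (‖Q‖ ^ 2) ^ m * ∑ i, ‖x i‖ ^ 2 := by
          rw [Finset.mul_sum]
          refine Finset.sum_congr rfl fun i _ => ?_
          rw [mul_pow, ← pow_mul, ← pow_mul, mul_comm m 2]

/-- If `T : E → E` is adjointable with modulus `R = |T|`, which itself has a positive
self-adjoint square root `Q = |T|^(1/2)`, then `π̃₂(T)² ≤ ‖T‖·π̃₁(T)`. -/
theorem piTwo_sq_le_norm_mul_piOne (T : E →L[ℂ] E) (T' : E →L[ℂ] E)
    (hT : ∀ (x y : E), ⟪T x, y⟫_A = ⟪x, T' y⟫_A)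
    (R : E →L[ℂ] E)
    (hRsa : ∀ (x y : E), ⟪R x, y⟫_A = ⟪x, R y⟫_A)
    (hRpos : ∀ x : E, 0 ≤ ⟪R x, x⟫_A)
    (hRR : R.comp R = T'.comp T)
    (Q : E →L[ℂ] E)
    (hQsa : ∀ (x y : E), ⟪Q x, y⟫_A = ⟪x, Q y⟫_A)
    (hQpos : ∀ x : E, 0 ≤ ⟪Q x, x⟫_A)
    (hQQ : Q.comp Q = R) :
    (piTwo (⇑T)) ^ 2 ≤ ENNReal.ofReal ‖T‖ * piOne (⇑R) := by
  -- basic pointwise identities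
  have hTR : ∀ z : E, ⟪T z, T z⟫_A = ⟪R z, R z⟫_A := by
    intro z
    have h1 : T' (T z) = R (R z) := by
      have := congrArg (fun S : E →L[ℂ] E => S z) hRR
      simpa using this.symm
    rw [hT, h1, ← hRsa]
  have hRQ : ∀ z : E, R z = Q (Q z) := by
    intro z
    have := congrArg (fun S : E →L[ℂ] E => S z) hQQ
    simpa using this.symm
  have hQ2 : ∀ z : E, Q (Q z) = (Q ^ 2) z := by
    intro z
    rw [pow_two, ContinuousLinearMap.mul_apply]
  have hQ1 : ∀ z : E, Q z = (Q ^ 1) z := by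
    intro z
    rw [pow_one]
  -- norm comparisons : ‖Q‖² ≤ ‖R‖ ≤ ‖T‖
  have hRT : ‖R‖ ≤ ‖T‖ := by
    refine R.opNorm_le_bound (norm_nonneg T) fun z => ?_
    have h2 : ‖R z‖ ^ 2 = ‖T z‖ ^ 2 := by
      rw [rnorm_sq_eq, rnorm_sq_eq, hTR]
    have h3 : ‖R z‖ = ‖T z‖ := by
      have := congrArg Real.sqrt h2
      rwa [Real.sqrt_sq (norm_nonneg _), Real.sqrt_sq (norm_nonneg _)] at this
    rw [h3]
    exact T.le_opNorm z
  have hQR : ‖Q‖ ^ 2 ≤ ‖R‖ := by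
    have hQle : ‖Q‖ ≤ Real.sqrt ‖R‖ := by
      refine Q.opNorm_le_bound (Real.sqrt_nonneg _) fun z => ?_
      have h1 : ‖Q z‖ ^ 2 = ‖⟪R z, z⟫_A‖ := by
        rw [rnorm_sq_eq]
        congr 1
        rw [hRQ, hQsa (Q z) z]
      have h2 : ‖⟪R z, z⟫_A‖ ≤ ‖R‖ * ‖z‖ ^ 2 := by
        calc ‖⟪R z, z⟫_A‖ ≤ ‖R z‖ * ‖z‖ := rnorm_inner_le E
          _ ≤ (‖R‖ * ‖z‖) * ‖z‖ := by gcongr; exact R.le_opNorm z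
          _ = ‖R‖ * ‖z‖ ^ 2 := by ring
      have h3 : ‖Q z‖ ^ 2 ≤ (Real.sqrt ‖R‖ * ‖z‖) ^ 2 := by
        rw [mul_pow, Real.sq_sqrt (norm_nonneg R), h1]
        exact h2
      exact (pow_le_pow_iff_left₀ (norm_nonneg _)
        (by positivity) (by norm_num)).mp h3
    calc ‖Q‖ ^ 2 ≤ (Real.sqrt ‖R‖) ^ 2 := pow_le_pow_left₀ (norm_nonneg Q) hQle 2
      _ = ‖R‖ := Real.sq_sqrt (norm_nonneg R)
  -- the key pointwise (in `n`, `x`) estimate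
  have key : ∀ (n : ℕ) (x : Fin n → E), mu x ≤ 1 →
      ENNReal.ofReal ‖∑ i, ⟪T (x i), T (x i)⟫_A‖ ≤ ENNReal.ofReal ‖T‖ * piOne (⇑R) := by
    intro n x hx
    have e1 : ∑ i, ⟪T (x i), T (x i)⟫_A = ∑ i, ⟪(Q ^ 2) (x i), (Q ^ 2) (x i)⟫_A := by
      refine Finset.sum_congr rfl fun i _ => ?_
      rw [hTR, hRQ, hQ2]
    have e3 : ∑ i, ⟪R (x i), x i⟫_A = ∑ i, ⟪(Q ^ 1) (x i), (Q ^ 1) (x i)⟫_A := by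
      refine Finset.sum_congr rfl fun i _ => ?_
      rw [hRQ, hQsa, ← hQ1 (x i)]
    have hreal : ‖∑ i, ⟪T (x i), T (x i)⟫_A‖ ≤ ‖T‖ * ‖∑ i, ⟪R (x i), x i⟫_A‖ := by
      rw [e1, e3]
      refine (core' Q hQsa x).trans ?_
      exact mul_le_mul_of_nonneg_right (hQR.trans hRT) (norm_nonneg _)
    calc ENNReal.ofReal ‖∑ i, ⟪T (x i), T (x i)⟫_A‖
        ≤ ENNReal.ofReal (‖T‖ * ‖∑ i, ⟪R (x i), x i⟫_A‖) := ENNReal.ofReal_le_ofReal hreal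
      _ = ENNReal.ofReal ‖T‖ * ENNReal.ofReal ‖∑ i, ⟪R (x i), x i⟫_A‖ :=
          ENNReal.ofReal_mul (norm_nonneg _)
      _ ≤ ENNReal.ofReal ‖T‖ * piOne (⇑R) := by
          gcongr
          unfold piOne
          exact le_iSup_of_le n <| le_iSup_of_le x <| le_iSup_of_le hx le_rfl
  -- assembling
  have hsup : piTwo (⇑T) ≤ (ENNReal.ofReal ‖T‖ * piOne (⇑R)) ^ (1 / 2 : ℝ) := by
    unfold piTwo
    refine iSup_le fun n => iSup_le fun x => iSup_le fun hx => ?_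
    have h := key n x hx
    have e : ENNReal.ofReal (Real.sqrt ‖∑ i, ⟪T (x i), T (x i)⟫_A‖)
        = (ENNReal.ofReal ‖∑ i, ⟪T (x i), T (x i)⟫_A‖) ^ (1 / 2 : ℝ) := by
      rw [ENNReal.ofReal_rpow_of_nonneg (norm_nonneg _) (by norm_num),
        ← Real.sqrt_eq_rpow]
    rw [e]
    exact ENNReal.rpow_le_rpow h (by norm_num)
  calc piTwo (⇑T) ^ 2 ≤ ((ENNReal.ofReal ‖T‖ * piOne (⇑R)) ^ (1 / 2 : ℝ)) ^ 2 :=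
        pow_le_pow_left' hsup 2
    _ = ENNReal.ofReal ‖T‖ * piOne (⇑R) := by
        rw [← ENNReal.rpow_natCast ((ENNReal.ofReal ‖T‖ * piOne (⇑R)) ^ (1 / 2 : ℝ)) 2,
          ← ENNReal.rpow_mul]
        norm_num
end
end
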